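/- Let T be the Gauss map. For every irrational x with 0 < x < 1/2 whose first partial quotient ⌊1/x⌋ is at least 2, one has T(x) = T(T(1 − x)). -/

import Mathlib

noncomputable def gaussMap (t : ℝ) : ℝ := 1 / t - ⌊1 / t⌋

theorem stmt_3 (x : ℝ) (hx : Irrational x) (h0 : 0 < x) (h1 : x < 1 / 2)
    (ha : 2 ≤ ⌊1 / x⌋) :
    gaussMap x = gaussMap (gaussMap (1 - x)) := by
  have hx0 : x ≠ 0 := ne_of_gt h0
  have h1x : (0:ℝ) < 1 - x := by linarith
  have h1xne : (1:ℝ) - x ≠ 0 := ne_of_gt h1x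
  have hfloor1 : ⌊1/(1-x)⌋ = 1 := by
    rw [Int.floor_eq_iff]
    constructor
    · rw [le_div_iff₀ h1x]; push_cast; linarith
    · rw [div_lt_iff₀ h1x]; push_cast; linarith
  have hg : gaussMap (1 - x) = x / (1 - x) := by
    rw [gaussMap, hfloor1]; push_cast; field_simp; ring
  rw [hg]
  have hinv : 1 / (x/(1-x)) = 1/x - 1 := by field_simp
  simp only [gaussMap]
  rw [hinv]
  have hf : ⌊1/x - 1⌋ = ⌊1/x⌋ - 1 := by
    have := Int.floor_sub_intCast (1/x) 1
    push_cast at this; exact this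
  rw [hf]; push_cast; ring
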